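/- arXiv:2509.13640 — 2 statements merged into one kernel-verified Lean document; each statement's English description precedes it below -/
import Mathlib

section
/- Let η : [0,∞) × ℝ² → ℝ be C¹ with η_t(t,x) ≠ 0 everywhere, let K : ℝ² → ℝ be C¹ and positive, and let u be a C² solution of u_{tt} − ∇·(K∇u) = 0. Set e(t,x) = ½(u_t² + K|∇u|²). Then pointwise: ∂_t(η e) − ∇·(η u_t K ∇u) + [K/(2(−η_t))]|η_t ∇u − u_t ∇η|² + [1/(2η_t)] u_t² (K|∇η|² − η_t²) = 0. -/
open MeasureTheory Real Set

/-- Divergence of a vector field on `ℝ²`. -/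
noncomputable def div2 (F : EuclideanSpace ℝ (Fin 2) → EuclideanSpace ℝ (Fin 2))
    (x : EuclideanSpace ℝ (Fin 2)) : ℝ :=
  ∑ i : Fin 2, fderiv ℝ F x (EuclideanSpace.single i 1) i

open ContinuousLinearMap InnerProductSpace

local notation "E2" => EuclideanSpace ℝ (Fin 2)
local notation "⟪" a ", " b "⟫" => @inner ℝ _ _ a b

namespace TY

variable {F' : Type*} [NormedAddCommGroup F'] [NormedSpace ℝ F']

lemma slice_right {f : ℝ × E2 → F'} {t : ℝ} {x : E2}
    (hf : DifferentiableAt ℝ f (t, x)) :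
    HasFDerivAt (fun y => f (t, y)) ((fderiv ℝ f (t, x)).comp (inr ℝ ℝ E2)) x :=
  hf.hasFDerivAt.comp x (hasFDerivAt_prodMk_right t x)

lemma slice_left {f : ℝ × E2 → F'} {t : ℝ} {x : E2}
    (hf : DifferentiableAt ℝ f (t, x)) :
    HasDerivAt (fun s => f (s, x)) (fderiv ℝ f (t, x) (1, 0)) t := by
  have h := (hf.hasFDerivAt.comp t (hasFDerivAt_prodMk_left t x)).hasDerivAt
  simpa [Function.comp_def] using h

lemma sum_inner_single (a b : E2) :
    ∑ i : Fin 2, ⟪a, EuclideanSpace.single i 1⟫ * b i = ⟪a, b⟫ := by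
  simp [PiLp.inner_apply, RCLike.inner_apply, EuclideanSpace.inner_single_right,
    Fin.sum_univ_two]
  ring

lemma inner_grad (f : E2 → ℝ) (y v : E2) : ⟪gradient f y, v⟫ = fderiv ℝ f y v :=
  toDual_symm_apply

lemma div2_smul {f : E2 → ℝ} {G : E2 → E2} {x : E2}
    (hf : DifferentiableAt ℝ f x) (hG : DifferentiableAt ℝ G x) :
    div2 (fun y => f y • G y) x
      = (∑ i : Fin 2, fderiv ℝ f x (EuclideanSpace.single i 1) * G x i)
        + f x * div2 G x := by
  unfold div2
  rw [fderiv_fun_smul hf hG]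
  simp only [ContinuousLinearMap.add_apply, ContinuousLinearMap.smul_apply,
    ContinuousLinearMap.smulRight_apply, PiLp.add_apply, PiLp.smul_apply, smul_eq_mul]
  rw [Finset.sum_add_distrib, Finset.mul_sum]
  ring_nf

end TY

/-- the Todorova–Yordanov pointwise weighted energy identity. -/
theorem stmt_9
    (K : EuclideanSpace ℝ (Fin 2) → ℝ) (hK : ContDiff ℝ 1 K) (hKpos : ∀ x, 0 < K x)
    (η u : ℝ → EuclideanSpace ℝ (Fin 2) → ℝ)
    (hη : ContDiff ℝ 1 (fun p : ℝ × EuclideanSpace ℝ (Fin 2) => η p.1 p.2))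
    (hu : ContDiff ℝ 2 (fun p : ℝ × EuclideanSpace ℝ (Fin 2) => u p.1 p.2))
    (ut ηt : ℝ → EuclideanSpace ℝ (Fin 2) → ℝ)
    (hut : ∀ t x, ut t x = deriv (fun s => u s x) t)
    (hηt : ∀ t x, ηt t x = deriv (fun s => η s x) t)
    (hηt0 : ∀ t x, ηt t x ≠ 0)
    (e : ℝ → EuclideanSpace ℝ (Fin 2) → ℝ)
    (he : ∀ t x, e t x = (1 / 2) * ((ut t x) ^ 2 + K x * ‖gradient (u t) x‖ ^ 2))
    (hPDE : ∀ t x, deriv (fun s => ut s x) t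
      = div2 (fun y => K y • gradient (u t) y) x) :
    ∀ t x,
      deriv (fun s => η s x * e s x) t
        - div2 (fun y => (η t y * ut t y) • (K y • gradient (u t) y)) x
        + (K x / (2 * (-(ηt t x))))
            * ‖(ηt t x) • gradient (u t) x - (ut t x) • gradient (η t) x‖ ^ 2
        + (1 / (2 * ηt t x)) * (ut t x) ^ 2
            * (K x * ‖gradient (η t) x‖ ^ 2 - (ηt t x) ^ 2) = 0 := by
  intro t x
  set U : ℝ × E2 → ℝ := fun p => u p.1 p.2 with hUdef
  set H : ℝ × E2 → ℝ := fun p => η p.1 p.2 with hHdef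
  have hUd : Differentiable ℝ U := hu.differentiable two_ne_zero
  have hHd : Differentiable ℝ H := hη.differentiable one_ne_zero
  set D := fderiv ℝ U with hDdef
  have hD1 : ContDiff ℝ 1 D := hu.fderiv_right (le_refl 2)
  have hDd : Differentiable ℝ D := hD1.differentiable one_ne_zero
  set B := fderiv ℝ D (t, x) with hBdef
  have hsym : ∀ v w, B v w = B w v := by
    intro v w
    exact (hu.contDiffAt (x := (t, x))).isSymmSndFDerivAt (by simp) v w
  -- the continuous linear map  L ↦ (toDual).symm (L ∘ inr)
  let Ψ : ((ℝ × E2) →L[ℝ] ℝ) →L[ℝ] (E2 →L[ℝ] ℝ) :=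
    (ContinuousLinearMap.compL ℝ E2 (ℝ × E2) ℝ).flip (inr ℝ ℝ E2)
  let T : StrongDual ℝ E2 ≃L[ℝ] E2 :=
    (toDual ℝ E2).symm.toContinuousLinearEquiv
  let Φ : ((ℝ × E2) →L[ℝ] ℝ) →L[ℝ] E2 := (T : StrongDual ℝ E2 →L[ℝ] E2).comp Ψ
  have hΦ : ∀ L : (ℝ × E2) →L[ℝ] ℝ, Φ L = (toDual ℝ E2).symm (L.comp (inr ℝ ℝ E2)) := by
    intro L; rfl
  -- slice facts
  have fderiv_slice : ∀ (s : ℝ) (y : E2),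
      fderiv ℝ (u s) y = (D (s, y)).comp (inr ℝ ℝ E2) := by
    intro s y
    exact (TY.slice_right (f := U) (hUd (s, y))).fderiv
  have grad_u : ∀ (s : ℝ) (y : E2), gradient (u s) y = Φ (D (s, y)) := by
    intro s y
    have h0 : gradient (u s) y = (toDual ℝ E2).symm (fderiv ℝ (u s) y) := rfl
    rw [h0, fderiv_slice, hΦ]
  have hut_eq : ∀ (s : ℝ) (y : E2), ut s y = D (s, y) (1, 0) := by
    intro s y
    rw [hut]
    exact (TY.slice_left (f := U) (hUd (s, y))).deriv
  -- η time derivative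
  have hηs : HasDerivAt (fun s => η s x) (ηt t x) t := by
    have h := TY.slice_left (f := H) (hHd (t, x))
    have h2 : ηt t x = fderiv ℝ H (t, x) (1, 0) := by
      rw [hηt]; exact h.deriv
    rw [h2]; exact h
  -- time derivative of D (s, x)
  have hDs : HasDerivAt (fun s => D (s, x)) (B ((1 : ℝ), (0 : E2))) t := by
    have h := TY.slice_left (f := D) (hDd (t, x))
    exact h
  -- time derivative of ut
  have hutts : HasDerivAt (fun s => ut s x) (B (1, 0) (1, 0)) t := by
    have h3 := ((ContinuousLinearMap.apply ℝ ℝ ((1 : ℝ), (0 : E2))).hasFDerivAt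
      (x := D (t, x))).comp_hasDerivAt t hDs
    have heq : (fun s => ut s x) = fun s => D (s, x) (1, 0) :=
      funext fun s => hut_eq s x
    rw [heq]
    exact h3
  set G : E2 → E2 := fun y => K y • gradient (u t) y with hGdef
  have hutt : HasDerivAt (fun s => ut s x) (div2 G x) t := by
    have e1 : B (1, 0) (1, 0) = div2 G x := by
      rw [← hutts.deriv]; exact hPDE t x
    exact e1 ▸ hutts
  -- time derivative of the gradient
  set g := gradient (u t) x with hgdef
  set w := gradient (ut t) x with hwdef
  have hgrads : HasDerivAt (fun s => gradient (u s) x) (Φ (B (1, 0))) t := by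
    have h2 := Φ.hasFDerivAt.comp_hasDerivAt t hDs
    have heq : (fun s => gradient (u s) x) = fun s => Φ (D (s, x)) :=
      funext fun s => grad_u s x
    rw [heq]
    exact h2
  -- spatial derivative of ut and equality with Φ (B (1,0)) via Schwarz
  have hfd : HasFDerivAt (ut t) ((B ((1 : ℝ), (0 : E2))).comp (inr ℝ ℝ E2)) x := by
    have h1 : HasFDerivAt (fun y => D (t, y)) (B.comp (inr ℝ ℝ E2)) x :=
      TY.slice_right (f := D) (hDd (t, x))
    have h2 := ((ContinuousLinearMap.apply ℝ ℝ ((1 : ℝ), (0 : E2))).hasFDerivAt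
      (x := D (t, x))).comp x h1
    have h2' : HasFDerivAt (fun y => D (t, y) ((1 : ℝ), (0 : E2)))
        (((ContinuousLinearMap.apply ℝ ℝ ((1 : ℝ), (0 : E2)))).comp
          (B.comp (inr ℝ ℝ E2))) x := h2
    have heq : (fun y => D (t, y) ((1 : ℝ), (0 : E2))) = ut t :=
      funext fun y => (hut_eq t y).symm
    rw [heq] at h2'
    clear h2
    rename' h2' => h2
    refine h2.congr_fderiv ?_
    refine ContinuousLinearMap.ext fun v => ?_
    simp only [ContinuousLinearMap.comp_apply, ContinuousLinearMap.inr_apply,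
      ContinuousLinearMap.apply_apply]
    exact (hsym (1, 0) ((0 : ℝ), v)).symm
  have hw : Φ (B (1, 0)) = w := by
    have h0 : gradient (ut t) x = (toDual ℝ E2).symm (fderiv ℝ (ut t) x) := rfl
    rw [hwdef, h0, hfd.fderiv, hΦ]
  -- time derivative of ‖∇u‖²
  have hnorm : HasDerivAt (fun s => ‖gradient (u s) x‖ ^ 2) (2 * ⟪w, g⟫) t := by
    rw [← hw]
    have h := hgrads.inner ℝ hgrads
    have heq : (fun s => ‖gradient (u s) x‖ ^ 2)
        = fun s => ⟪gradient (u s) x, gradient (u s) x⟫ :=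
      funext fun s => (real_inner_self_eq_norm_sq _).symm
    rw [heq]
    refine h.congr_deriv ?_
    rw [real_inner_comm]
    ring
  -- time derivative of the energy
  have hE : HasDerivAt (fun s => e s x)
      ((1 / 2) * (2 * ut t x * div2 G x + K x * (2 * ⟪w, g⟫))) t := by
    have h1 : HasDerivAt (fun s => ut s x ^ 2) (2 * ut t x * div2 G x) t := by
      have := hutt.pow 2
      refine (this : HasDerivAt (fun s => ut s x ^ 2) _ t).congr_deriv ?_
      norm_num
    have h2 := hnorm.const_mul (K x)
    have h3 := (h1.add h2).const_mul (1 / 2 : ℝ)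
    have heq : (fun s => e s x)
        = fun s => (1 / 2) * (ut s x ^ 2 + K x * ‖gradient (u s) x‖ ^ 2) :=
      funext fun s => he s x
    rw [heq]
    exact h3
  have hderiv_val : deriv (fun s => η s x * e s x) t
      = ηt t x * e t x
        + η t x * ((1 / 2) * (2 * ut t x * div2 G x + K x * (2 * ⟪w, g⟫))) :=
    (hηs.mul hE).deriv
  -- spatial part
  have hgradu_diff : DifferentiableAt ℝ (fun y => gradient (u t) y) x := by
    have heq : (fun y => gradient (u t) y) = fun y => Φ (D (t, y)) :=
      funext fun y => grad_u t y
    rw [heq]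
    exact (Φ.hasFDerivAt.comp x (TY.slice_right (f := D) (hDd (t, x)))).differentiableAt
  have hGdiff : DifferentiableAt ℝ G x :=
    ((hK.differentiable one_ne_zero x).smul hgradu_diff)
  have hηtx : HasFDerivAt (η t) ((fderiv ℝ H (t, x)).comp (inr ℝ ℝ E2)) x :=
    TY.slice_right (f := H) (hHd (t, x))
  have hf_diff : DifferentiableAt ℝ (fun y => η t y * ut t y) x :=
    hηtx.differentiableAt.mul hfd.differentiableAt
  set h := gradient (η t) x with hhdef
  have hdiv_val : div2 (fun y => (η t y * ut t y) • (K y • gradient (u t) y)) x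
      = K x * (η t x * ⟪w, g⟫ + ut t x * ⟪h, g⟫) + (η t x * ut t x) * div2 G x := by
    rw [TY.div2_smul hf_diff hGdiff]
    congr 1
    rw [fderiv_fun_mul hηtx.differentiableAt hfd.differentiableAt]
    have hGx : G x = K x • g := rfl
    have hterm : ∀ i : Fin 2,
        (η t x • fderiv ℝ (ut t) x + ut t x • fderiv ℝ (η t) x)
            (EuclideanSpace.single i 1) * G x i
        = K x * (η t x * (⟪w, EuclideanSpace.single i 1⟫ * g i)
            + ut t x * (⟪h, EuclideanSpace.single i 1⟫ * g i)) := by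
      intro i
      have e1 : fderiv ℝ (ut t) x (EuclideanSpace.single i 1)
          = ⟪w, EuclideanSpace.single i 1⟫ := (TY.inner_grad _ _ _).symm
      have e2 : fderiv ℝ (η t) x (EuclideanSpace.single i 1)
          = ⟪h, EuclideanSpace.single i 1⟫ := (TY.inner_grad _ _ _).symm
      simp only [ContinuousLinearMap.add_apply, ContinuousLinearMap.smul_apply,
        smul_eq_mul, e1, e2, hGx, PiLp.smul_apply]
      ring
    rw [Finset.sum_congr rfl fun i _ => hterm i]
    rw [← Finset.mul_sum, Finset.sum_add_distrib, ← Finset.mul_sum, ← Finset.mul_sum,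
      TY.sum_inner_single, TY.sum_inner_single]
  -- final algebra
  have hnormexp : ‖ηt t x • g - ut t x • h‖ ^ 2
      = ηt t x ^ 2 * ‖g‖ ^ 2 - 2 * (ηt t x * ut t x) * ⟪g, h⟫ + ut t x ^ 2 * ‖h‖ ^ 2 := by
    rw [norm_sub_sq_real, real_inner_smul_left, real_inner_smul_right, norm_smul, norm_smul,
      mul_pow, mul_pow]
    simp only [Real.norm_eq_abs, sq_abs]
    ring
  have hwg : ⟪h, g⟫ = ⟪g, h⟫ := real_inner_comm _ _
  rw [hderiv_val, hdiv_val, hnormexp, he t x, hwg]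
  have hb := hηt0 t x
  field_simp
  ring
end

section
/- Suppose E : [0,∞) → [0,∞) is continuous and satisfies (t − c) E(t) ≤ A₀(t) + γ ∫₀^t E(s) ds for all t ≥ t₀ > c, where c ≥ 0, γ ∈ (0,1), and A₀(t) = α + β√(log t) with α, β ≥ 0. Then E(t) = O(t^{γ−1} √(log t)) as t → ∞. -/
open MeasureTheory Real Set

/-- the Grönwall-type inequality of Section 4 yields the decay rate
`E(t) = O(t^{γ-1} √(log t))`. -/
theorem stmt_14 (c γ α β t₀ : ℝ) (hc : 0 ≤ c) (hγ : γ ∈ Set.Ioo (0 : ℝ) 1)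
    (hα : 0 ≤ α) (hβ : 0 ≤ β) (ht₀ : c < t₀)
    (E : ℝ → ℝ) (hEcont : ContinuousOn E (Set.Ici (0 : ℝ)))
    (hEnonneg : ∀ t : ℝ, 0 ≤ t → 0 ≤ E t)
    (hineq : ∀ t : ℝ, t₀ ≤ t →
      (t - c) * E t ≤ (α + β * Real.sqrt (Real.log t)) + γ * ∫ s in Set.Ioc (0 : ℝ) t, E s) :
    ∃ C T : ℝ, 0 < C ∧ ∀ t : ℝ, T ≤ t →
      E t ≤ C * t ^ (γ - 1) * Real.sqrt (Real.log t) := by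
  obtain ⟨hγ0, hγ1⟩ := hγ
  have ht₀pos : 0 < t₀ := lt_of_le_of_lt hc ht₀
  have hbc : 0 < t₀ - c := sub_pos.mpr ht₀
  set A : ℝ → ℝ := fun t => α + β * Real.sqrt (Real.log t) with hA
  set F : ℝ → ℝ := fun t => ∫ s in (0:ℝ)..t, E s with hF
  have hInt : ∀ a b : ℝ, 0 ≤ a → 0 ≤ b → IntervalIntegrable E volume a b := by
    intro a b ha hb
    exact (hEcont.mono (fun x hx => le_trans (le_min ha hb) hx.1)).intervalIntegrable
  have hFderiv : ∀ t : ℝ, 0 < t → HasDerivAt F (E t) t := by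
    intro t ht
    have hmeas : StronglyMeasurableAtFilter E (nhds t) volume :=
      (hEcont.mono Ioi_subset_Ici_self).stronglyMeasurableAtFilter isOpen_Ioi t ht
    have hcontAt : ContinuousAt E t := hEcont.continuousAt (Ici_mem_nhds ht)
    exact intervalIntegral.integral_hasDerivAt_right (hInt 0 t le_rfl ht.le) hmeas hcontAt
  have hphi : ∀ t : ℝ, c < t →
      HasDerivAt (fun u : ℝ => (u - c) ^ (-γ)) (-γ * (t - c) ^ (-γ - 1)) t := by
    intro t ht
    have h1 : HasDerivAt (fun u : ℝ => u - c) 1 t := (hasDerivAt_id t).sub_const c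
    have := h1.rpow_const (p := -γ) (Or.inl (ne_of_gt (sub_pos.mpr ht)))
    simpa using this
  have hAnonneg : ∀ t : ℝ, 0 ≤ A t := fun t =>
    add_nonneg hα (mul_nonneg hβ (Real.sqrt_nonneg _))
  -- the key Grönwall estimate
  have hK : ∀ T : ℝ, t₀ ≤ T → (T - c) ^ (-γ) * F T ≤
      (t₀ - c) ^ (-γ) * F t₀ + A T * ((t₀ - c) ^ (-γ) / γ) := by
    intro T hT
    set H : ℝ → ℝ := fun t => (t - c) ^ (-γ) * F t + A T * ((t - c) ^ (-γ) / γ) with hH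
    have hHderiv : ∀ t : ℝ, t₀ ≤ t → HasDerivAt H
        ((-γ * (t - c) ^ (-γ - 1)) * F t + (t - c) ^ (-γ) * E t
          + A T * ((-γ * (t - c) ^ (-γ - 1)) / γ)) t := by
      intro t ht
      have htc : c < t := lt_of_lt_of_le ht₀ ht
      have htpos : 0 < t := lt_of_le_of_lt hc htc
      exact ((hphi t htc).mul (hFderiv t htpos)).add
        (((hphi t htc).div_const γ).const_mul (A T))
    have hderiv_nonpos : ∀ t : ℝ, t₀ ≤ t → t ≤ T →
        (-γ * (t - c) ^ (-γ - 1)) * F t + (t - c) ^ (-γ) * E t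
          + A T * ((-γ * (t - c) ^ (-γ - 1)) / γ) ≤ 0 := by
      intro t ht htT
      have htc : c < t := lt_of_lt_of_le ht₀ ht
      have htpos : 0 < t := lt_of_le_of_lt hc htc
      have hsub : 0 < t - c := sub_pos.mpr htc
      have hFt : F t = ∫ s in Set.Ioc (0:ℝ) t, E s :=
        intervalIntegral.integral_of_le htpos.le
      have h2 : (t - c) * E t ≤ A t + γ * F t := by
        rw [hFt]; exact hineq t ht
      have hpow : (0:ℝ) < (t - c) ^ (-γ - 1) := Real.rpow_pos_of_pos hsub _
      have hsplit : (t - c) ^ (-γ) = (t - c) ^ (-γ - 1) * (t - c) := by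
        rw [← Real.rpow_add_one (ne_of_gt hsub)]
        ring_nf
      have h3 : (t - c) ^ (-γ) * E t ≤ (t - c) ^ (-γ - 1) * (A t + γ * F t) := by
        calc (t - c) ^ (-γ) * E t = (t - c) ^ (-γ - 1) * ((t - c) * E t) := by
              rw [hsplit]; ring
          _ ≤ (t - c) ^ (-γ - 1) * (A t + γ * F t) :=
              mul_le_mul_of_nonneg_left h2 hpow.le
      have hAm : A t ≤ A T := by
        have hl : Real.log t ≤ Real.log T := Real.log_le_log htpos htT
        have hs := Real.sqrt_le_sqrt hl
        simp only [hA]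
        nlinarith
      have hmono : (t - c) ^ (-γ - 1) * A t ≤ (t - c) ^ (-γ - 1) * A T :=
        mul_le_mul_of_nonneg_left hAm hpow.le
      have hγne : γ ≠ 0 := ne_of_gt hγ0
      have heq : A T * ((-γ * (t - c) ^ (-γ - 1)) / γ) = -(A T * (t - c) ^ (-γ - 1)) := by
        field_simp
      rw [heq]
      nlinarith [h3, hmono]
    have hanti : AntitoneOn H (Set.Icc t₀ T) := by
      apply antitoneOn_of_deriv_nonpos (convex_Icc _ _)
      · intro t ht
        exact ((hHderiv t ht.1).continuousAt).continuousWithinAt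
      · intro t ht
        rw [interior_Icc] at ht
        exact (hHderiv t ht.1.le).differentiableAt.differentiableWithinAt
      · intro t ht
        rw [interior_Icc] at ht
        rw [(hHderiv t ht.1.le).deriv]
        exact hderiv_nonpos t ht.1.le ht.2.le
    have hHT := hanti (left_mem_Icc.mpr hT) (right_mem_Icc.mpr hT) hT
    have hpos1 : 0 ≤ A T * ((T - c) ^ (-γ) / γ) :=
      mul_nonneg (hAnonneg T)
        (div_nonneg (Real.rpow_nonneg (by linarith : (0:ℝ) ≤ T - c) _) hγ0.le)
    simp only [hH] at hHT
    linarith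
  set C₀ : ℝ := (t₀ - c) ^ (-γ) * F t₀ with hC₀def
  set C₁ : ℝ := (t₀ - c) ^ (-γ) / γ with hC₁def
  have hC₀ : 0 ≤ C₀ := by
    apply mul_nonneg (Real.rpow_nonneg hbc.le _)
    exact intervalIntegral.integral_nonneg ht₀pos.le (fun x hx => hEnonneg x hx.1)
  have hC₁ : 0 ≤ C₁ := div_nonneg (Real.rpow_nonneg hbc.le _) hγ0.le
  clear_value C₀ C₁
  set C' : ℝ := (α + β) + γ * (C₀ + (α + β) * C₁) + 1 with hC'def
  have hC'pos : 0 < C' := by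
    have h1 : 0 ≤ γ * (C₀ + (α + β) * C₁) :=
      mul_nonneg hγ0.le (add_nonneg hC₀ (mul_nonneg (add_nonneg hα hβ) hC₁))
    simp only [hC'def]; linarith
  clear_value C'
  refine ⟨2 * C', max (max t₀ (2 * c)) (Real.exp 1), by linarith, ?_⟩
  intro t ht
  have ht1 : t₀ ≤ t := le_trans (le_max_of_le_left (le_max_left _ _)) ht
  have h2c : 2 * c ≤ t := le_trans (le_max_of_le_left (le_max_right _ _)) ht
  have hexp : Real.exp 1 ≤ t := le_trans (le_max_right _ _) ht
  have htpos : 0 < t := lt_of_lt_of_le (Real.exp_pos 1) hexp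
  have htc : c < t := lt_of_lt_of_le ht₀ ht1
  have hsub : 0 < t - c := sub_pos.mpr htc
  have ht1' : 1 ≤ t := le_trans (by simpa using Real.exp_le_exp.mpr zero_le_one) hexp
  have hlog : 1 ≤ Real.log t := (Real.le_log_iff_exp_le htpos).mpr hexp
  set L : ℝ := Real.sqrt (Real.log t) with hL
  have hLnonneg : 0 ≤ L := Real.sqrt_nonneg _
  have hL1 : 1 ≤ L := by
    rw [hL, show (1:ℝ) = Real.sqrt 1 from (Real.sqrt_one).symm]
    exact Real.sqrt_le_sqrt hlog
  have e1 : A t ≤ (α + β) * L := by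
    simp only [hA]
    nlinarith
  have htγ : 1 ≤ t ^ γ := by
    rw [show (1:ℝ) = t ^ (0:ℝ) from (Real.rpow_zero t).symm]
    exact Real.rpow_le_rpow_of_exponent_le ht1' hγ0.le
  have hrpow_pos : 0 < (t - c) ^ γ := Real.rpow_pos_of_pos hsub _
  have hFb : F t ≤ (t - c) ^ γ * (C₀ + A t * C₁) := by
    have hk := hK t ht1
    have hid : F t = (t - c) ^ γ * ((t - c) ^ (-γ) * F t) := by
      rw [← mul_assoc, ← Real.rpow_add hsub]
      simp
    rw [hid]
    exact mul_le_mul_of_nonneg_left hk hrpow_pos.le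
  have e2 : C₀ + A t * C₁ ≤ (C₀ + (α + β) * C₁) * L := by
    have h1 : C₀ ≤ C₀ * L := le_mul_of_one_le_right hC₀ hL1
    have h2 : A t * C₁ ≤ (α + β) * L * C₁ := mul_le_mul_of_nonneg_right e1 hC₁
    nlinarith
  have e3 : (t - c) ^ γ ≤ t ^ γ :=
    Real.rpow_le_rpow hsub.le (by linarith) hγ0.le
  have e6 : (t - c) ^ γ * (C₀ + A t * C₁) ≤ t ^ γ * ((C₀ + (α + β) * C₁) * L) :=
    mul_le_mul e3 e2 (add_nonneg hC₀ (mul_nonneg (hAnonneg t) hC₁))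
      (Real.rpow_nonneg htpos.le _)
  have hFt : F t = ∫ s in Set.Ioc (0:ℝ) t, E s := intervalIntegral.integral_of_le htpos.le
  have e4 : (t - c) * E t ≤ A t + γ * F t := by
    rw [hFt]; exact hineq t ht1
  have hb : γ * F t ≤ γ * (t ^ γ * ((C₀ + (α + β) * C₁) * L)) :=
    mul_le_mul_of_nonneg_left (hFb.trans e6) hγ0.le
  have hcc : A t ≤ t ^ γ * ((α + β) * L) :=
    e1.trans (le_mul_of_one_le_left (mul_nonneg (add_nonneg hα hβ) hLnonneg) htγ)
  have hd : t ^ γ * ((α + β) * L) + γ * (t ^ γ * ((C₀ + (α + β) * C₁) * L)) ≤ C' * t ^ γ * L := by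
    have hident : t ^ γ * ((α + β) * L) + γ * (t ^ γ * ((C₀ + (α + β) * C₁) * L))
        = (C' - 1) * t ^ γ * L := by
      simp only [hC'def]; ring
    rw [hident]
    have h0 : 0 ≤ t ^ γ * L := mul_nonneg (Real.rpow_nonneg htpos.le γ) hLnonneg
    calc (C' - 1) * t ^ γ * L = (C' - 1) * (t ^ γ * L) := by ring
      _ ≤ C' * (t ^ γ * L) := mul_le_mul_of_nonneg_right (by linarith) h0
      _ = C' * t ^ γ * L := by ring
  have hmain : (t - c) * E t ≤ C' * t ^ γ * L := by linarith
  have hhalf : t / 2 ≤ t - c := by linarith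
  have hEt : 0 ≤ E t := hEnonneg t htpos.le
  have hstep : E t * (t / 2) ≤ C' * t ^ γ * L := by
    have : (t / 2) * E t ≤ (t - c) * E t := mul_le_mul_of_nonneg_right hhalf hEt
    linarith
  have hEle : E t ≤ C' * t ^ γ * L / (t / 2) :=
    (le_div_iff₀ (by linarith : (0:ℝ) < t / 2)).mpr hstep
  have hfin : C' * t ^ γ * L / (t / 2) = 2 * C' * t ^ (γ - 1) * L := by
    rw [Real.rpow_sub htpos, Real.rpow_one]
    field_simp
  rw [← hfin]
  exact hEle
end
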